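/- arXiv:2009.10052 — 6 statements merged into one kernel-verified Lean document; each statement's English description precedes it below -/
import Mathlib

section
/- Let E be a set, let A, B ⊆ E, and let (Y_j)_{j ∈ J} be a finite family of subsets of E. Define ‖X‖ = Σ_{j ∈ J} |X|*_{Y_j} for X ⊆ E. Then ‖A ∩ B‖ + ‖A ∪ B‖ ≤ ‖A‖ + ‖B‖. -/
open Pointwise

open scoped Classical in
/-- `sep X Z` is the indicator `|X|*_Z`: it is `1` if `X` separates `Z`
(i.e. `Z` meets both `X` and its complement) and `0` otherwise. -/
noncomputable def sep {E : Type*} (X Z : Set E) : ℕ :=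
  if (Z ∩ X).Nonempty ∧ (Z ∩ Xᶜ).Nonempty then 1 else 0

lemma sep_eq_one {E : Type*} {X Z : Set E}
    (h : (Z ∩ X).Nonempty ∧ (Z ∩ Xᶜ).Nonempty) : sep X Z = 1 := by
  simp [sep, h]

lemma sep_eq_zero {E : Type*} {X Z : Set E}
    (h : ¬((Z ∩ X).Nonempty ∧ (Z ∩ Xᶜ).Nonempty)) : sep X Z = 0 := by
  unfold sep; exact if_neg h

lemma sep_pointwise {E : Type*} (A B Z : Set E) :
    sep (A ∩ B) Z + sep (A ∪ B) Z ≤ sep A Z + sep B Z := by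
  classical
  by_cases h1 : (Z ∩ (A ∩ B)).Nonempty ∧ (Z ∩ (A ∩ B)ᶜ).Nonempty
  · by_cases h2 : (Z ∩ (A ∪ B)).Nonempty ∧ (Z ∩ (A ∪ B)ᶜ).Nonempty
    · obtain ⟨a, haZ, haA, haB⟩ := h1.1
      obtain ⟨c, hcZ, hc⟩ := h2.2
      rw [Set.mem_compl_iff, Set.mem_union] at hc
      push_neg at hc
      rw [sep_eq_one h1, sep_eq_one h2,
        sep_eq_one ⟨⟨a, haZ, haA⟩, ⟨c, hcZ, hc.1⟩⟩,
        sep_eq_one ⟨⟨a, haZ, haB⟩, ⟨c, hcZ, hc.2⟩⟩]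
    · obtain ⟨a, haZ, haA, haB⟩ := h1.1
      obtain ⟨c, hcZ, hc⟩ := h1.2
      rw [Set.mem_compl_iff, Set.mem_inter_iff] at hc
      push_neg at hc
      rw [sep_eq_one h1, sep_eq_zero h2]
      by_cases hcA : c ∈ A
      · rw [sep_eq_one ⟨⟨a, haZ, haB⟩, ⟨c, hcZ, hc hcA⟩⟩]; omega
      · rw [sep_eq_one ⟨⟨a, haZ, haA⟩, ⟨c, hcZ, hcA⟩⟩]; omega
  · by_cases h2 : (Z ∩ (A ∪ B)).Nonempty ∧ (Z ∩ (A ∪ B)ᶜ).Nonempty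
    · obtain ⟨a, haZ, ha⟩ := h2.1
      obtain ⟨c, hcZ, hc⟩ := h2.2
      rw [Set.mem_compl_iff, Set.mem_union] at hc
      push_neg at hc
      rw [sep_eq_one h2, sep_eq_zero h1]
      cases ha with
      | inl hA => rw [sep_eq_one ⟨⟨a, haZ, hA⟩, ⟨c, hcZ, hc.1⟩⟩]; omega
      | inr hB => rw [sep_eq_one ⟨⟨a, haZ, hB⟩, ⟨c, hcZ, hc.2⟩⟩]; omega
    · rw [sep_eq_zero h1, sep_eq_zero h2]; omega


theorem stmt_1 {E : Type*} {J : Type*} [Fintype J] (A B : Set E) (Y : J → Set E) :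
    (∑ j : J, sep (A ∩ B) (Y j)) + (∑ j : J, sep (A ∪ B) (Y j)) ≤
      (∑ j : J, sep A (Y j)) + (∑ j : J, sep B (Y j)) := by
  rw [← Finset.sum_add_distrib, ← Finset.sum_add_distrib]
  exact Finset.sum_le_sum fun j _ => sep_pointwise A B (Y j)
end

section
/- Let G be a group acting on a set E, let α ⊆ E be nonempty, and let P ≤ G be the subgroup generated by the pointwise stabilizers Stab_G(e) of the elements e ∈ α. Suppose that for every e ∈ α the intersection of the G-orbit of e with α equals the P-orbit of e, i.e. (G • e) ∩ α = P • e. Then P equals the setwise stabilizer Stab(α) = {g ∈ G : g • α = α}, and α satisfies the (edge) property: for every x ∈ G, α ∩ (x • α) ≠ ∅ implies x ∈ P. -/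
open Pointwise

theorem stmt_2 {G E : Type*} [Group G] [MulAction G E]
    (α : Set E) (hα : α.Nonempty)
    (P : Subgroup G) (hP : P = ⨆ e ∈ α, MulAction.stabilizer G e)
    (horb : ∀ e ∈ α, MulAction.orbit G e ∩ α = MulAction.orbit P e) :
    P = MulAction.stabilizer G α ∧
      ∀ x : G, (α ∩ x • α).Nonempty → x ∈ P := by
  have hPstab : ∀ p ∈ P, ∀ a ∈ α, p • a ∈ α := by
    intro p hp a ha
    have h1 : p • a ∈ MulAction.orbit P a := ⟨⟨p, hp⟩, rfl⟩
    rw [← horb a ha] at h1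
    exact h1.2
  have key : ∀ x : G, (α ∩ x • α).Nonempty → x ∈ P := by
    rintro x ⟨a, haα, hax⟩
    obtain ⟨b, hb, rfl⟩ := hax
    have h1 : (x : G) • b ∈ MulAction.orbit P b := by
      rw [← horb b hb]; exact ⟨⟨x, rfl⟩, haα⟩
    obtain ⟨p, hp⟩ := h1
    have hp' : (↑p : G) • b = x • b := hp
    have hst : (↑p)⁻¹ * x ∈ MulAction.stabilizer G b := by
      rw [MulAction.mem_stabilizer_iff, mul_smul, ← hp']
      simp
    have hle : MulAction.stabilizer G b ≤ ⨆ e ∈ α, MulAction.stabilizer G e :=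
      le_iSup₂ (f := fun e (_ : e ∈ α) => MulAction.stabilizer G e) b hb
    rw [← hP] at hle
    have hmem : (↑p)⁻¹ * x ∈ P := hle hst
    have := mul_mem p.2 hmem
    simpa using this
  refine ⟨le_antisymm ?_ ?_, key⟩
  · intro p hp
    rw [MulAction.mem_stabilizer_iff]
    apply subset_antisymm
    · rintro _ ⟨a, ha, rfl⟩
      exact hPstab p hp a ha
    · intro a ha
      exact ⟨p⁻¹ • a, hPstab p⁻¹ (inv_mem hp) a ha, by simp⟩
  · intro g hg
    obtain ⟨e, he⟩ := hα
    refine key g ⟨e, he, ?_⟩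
    rw [MulAction.mem_stabilizer_iff] at hg
    rw [hg]
    exact he
end

section
/- Assume the Setup (Notation 7.1). Then for every g ∈ G: B ∩ (g • B) ≠ ∅ if and only if g ∈ Q. -/
open Pointwise

/-- Setup (Notation 7.1): `α`, `β` are nonempty subsets of a `G`-set `E`, each
satisfying the (edge) property, with setwise stabilizers `P ≤ Q`, meeting each
other, and such that `G•α` and `G•β` cross simply.  With
`B = β ∪ Q • α`, for every `g ∈ G` we have `B ∩ g • B ≠ ∅` iff `g ∈ Q`. -/
theorem stmt_3 {G E : Type*} [Group G] [MulAction G E]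
    (α β : Set E) (hα : α.Nonempty) (hβ : β.Nonempty)
    (hedgeα : ∀ x : G, (α ∩ x • α).Nonempty → x • α = α)
    (hedgeβ : ∀ x : G, (β ∩ x • β).Nonempty → x • β = β)
    (P Q : Subgroup G)
    (hP : P = MulAction.stabilizer G α)
    (hQ : Q = MulAction.stabilizer G β)
    (hαβ : (α ∩ β).Nonempty)
    (hPQ : P ≤ Q)
    (hsimple : ∀ g : G, (α ∩ g • β).Nonempty → g ∈ Q)
    (B : Set E) (hB : B = β ∪ ⋃ q ∈ Q, q • α) :
    ∀ g : G, (B ∩ g • B).Nonempty ↔ g ∈ Q := by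
  subst hB
  intro g
  constructor
  · rintro ⟨x, hxB, hxgB⟩
    rw [Set.mem_smul_set_iff_inv_smul_mem] at hxgB
    set y := g⁻¹ • x with hy
    have hxy : g • y = x := smul_inv_smul g x
    rcases hxB with hxβ | hxQ
    · rcases hxgB with hyβ | hyQ
      · -- x ∈ β, y ∈ β
        have : (β ∩ g • β).Nonempty := ⟨x, hxβ, ⟨y, hyβ, hxy⟩⟩
        have := hedgeβ g this
        rw [hQ]; exact this
      · -- y ∈ q • α
        simp only [Set.mem_iUnion] at hyQ
        obtain ⟨q, hq, hyq⟩ := hyQ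
        rw [Set.mem_smul_set_iff_inv_smul_mem] at hyq
        have hmem : (α ∩ (g * q)⁻¹ • β).Nonempty := by
          refine ⟨q⁻¹ • y, hyq, ⟨x, hxβ, ?_⟩⟩
          show (g * q)⁻¹ • x = q⁻¹ • y
          rw [hy, mul_inv_rev, mul_smul]
        have := hsimple _ hmem
        have hgq : g * q ∈ Q := (inv_mem_iff).mp this
        have := mul_mem hgq (inv_mem hq)
        simpa using this
    · simp only [Set.mem_iUnion] at hxQ
      obtain ⟨q, hq, hxq⟩ := hxQ
      rw [Set.mem_smul_set_iff_inv_smul_mem] at hxq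
      rcases hxgB with hyβ | hyQ
      · -- x ∈ q•α, y ∈ β
        have hmem : (α ∩ (q⁻¹ * g) • β).Nonempty := by
          refine ⟨q⁻¹ • x, hxq, ⟨y, hyβ, ?_⟩⟩
          show (q⁻¹ * g) • y = q⁻¹ • x
          rw [mul_smul, hxy]
        have := hsimple _ hmem
        have := mul_mem hq this
        simpa using this
      · simp only [Set.mem_iUnion] at hyQ
        obtain ⟨q', hq', hyq⟩ := hyQ
        rw [Set.mem_smul_set_iff_inv_smul_mem] at hyq
        have hmem : (α ∩ (q⁻¹ * g * q') • α).Nonempty := by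
          refine ⟨q⁻¹ • x, hxq, ⟨q'⁻¹ • y, hyq, ?_⟩⟩
          show (q⁻¹ * g * q') • q'⁻¹ • y = q⁻¹ • x
          rw [mul_smul, mul_smul, smul_inv_smul, hxy]
        have hstab : q⁻¹ * g * q' ∈ MulAction.stabilizer G α := hedgeα _ hmem
        have hPmem : q⁻¹ * g * q' ∈ P := by rw [hP]; exact hstab
        have hQmem := hPQ hPmem
        have := mul_mem (mul_mem hq hQmem) (inv_mem hq')
        simpa [mul_assoc] using this
  · intro hg
    have hgβ : g • β = β := by
      have : g ∈ MulAction.stabilizer G β := by rw [← hQ]; exact hg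
      exact this
    obtain ⟨b, hb⟩ := hβ
    refine ⟨b, Or.inl hb, ?_⟩
    rw [Set.mem_smul_set_iff_inv_smul_mem]
    left
    have h2 : g⁻¹ • β = β := inv_smul_eq_iff.2 hgβ.symm
    rw [← h2]
    exact Set.smul_mem_smul_set hb
end

section
/- Assume the Setup (Notation 7.1). Then Q • A is disjoint from β, and B = β ∪ Q • α equals the disjoint union of β and Q • A; moreover Q • α, β, B, and Bᶜ are each Q-invariant. -/
open Pointwise

/-- Setup (Notation 7.1).  With `γ = α ∩ β`, `A = α \ γ` and `B = β ∪ Q • α`: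
`Q • A` is disjoint from `β`, `B` is the (disjoint) union of `β` and `Q • A`,
and `Q • α`, `β`, `B`, `Bᶜ` are each `Q`-invariant. -/
theorem stmt_4 {G E : Type*} [Group G] [MulAction G E]
    (α β : Set E) (hα : α.Nonempty) (hβ : β.Nonempty)
    (hedgeα : ∀ x : G, (α ∩ x • α).Nonempty → x • α = α)
    (hedgeβ : ∀ x : G, (β ∩ x • β).Nonempty → x • β = β)
    (P Q : Subgroup G)
    (hP : P = MulAction.stabilizer G α)
    (hQ : Q = MulAction.stabilizer G β)
    (hαβ : (α ∩ β).Nonempty)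
    (hPQ : P ≤ Q)
    (hsimple : ∀ g : G, (α ∩ g • β).Nonempty → g ∈ Q)
    (γ A B : Set E)
    (hγ : γ = α ∩ β) (hA : A = α \ γ) (hB : B = β ∪ ⋃ q ∈ Q, q • α) :
    Disjoint (⋃ q ∈ Q, q • A) β ∧
    B = β ∪ ⋃ q ∈ Q, q • A ∧
    (∀ g ∈ Q, g • (⋃ q ∈ Q, q • α) = ⋃ q ∈ Q, q • α) ∧
    (∀ g ∈ Q, g • β = β) ∧
    (∀ g ∈ Q, g • B = B) ∧
    (∀ g ∈ Q, g • Bᶜ = Bᶜ) := by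
  have hβQ : ∀ g ∈ Q, g • β = β := by
    intro g hg
    rw [hQ] at hg
    exact hg
  have hdisj : Disjoint (⋃ q ∈ Q, q • A) β := by
    rw [Set.disjoint_left]
    rintro x hx hxβ
    simp only [Set.mem_iUnion] at hx
    obtain ⟨q, hq, hxq⟩ := hx
    rw [Set.mem_smul_set_iff_inv_smul_mem] at hxq
    rw [hA, hγ] at hxq
    refine hxq.2 ⟨hxq.1, ?_⟩
    rw [← hβQ q⁻¹ (inv_mem hq)]
    exact Set.smul_mem_smul_set hxβ
  have hUinv : ∀ g ∈ Q, g • (⋃ q ∈ Q, q • α) = ⋃ q ∈ Q, q • α := by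
    intro g hg
    rw [Set.smul_set_iUnion₂]
    ext x
    simp only [Set.mem_iUnion, smul_smul]
    constructor
    · rintro ⟨q, hq, hx⟩
      exact ⟨g * q, mul_mem hg hq, hx⟩
    · rintro ⟨q, hq, hx⟩
      refine ⟨g⁻¹ * q, mul_mem (inv_mem hg) hq, ?_⟩
      rwa [mul_inv_cancel_left]
  have hBeq : B = β ∪ ⋃ q ∈ Q, q • A := by
    rw [hB]
    apply Set.Subset.antisymm
    · apply Set.union_subset Set.subset_union_left
      rw [Set.iUnion₂_subset_iff]
      intro q hq x hx
      rw [Set.mem_smul_set_iff_inv_smul_mem] at hx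
      by_cases hxA : q⁻¹ • x ∈ A
      · refine Or.inr ?_
        simp only [Set.mem_iUnion]
        exact ⟨q, hq, Set.mem_smul_set_iff_inv_smul_mem.mpr hxA⟩
      · left
        rw [hA] at hxA
        have : q⁻¹ • x ∈ γ := by
          by_contra h
          exact hxA ⟨hx, h⟩
        rw [hγ] at this
        rw [← hβQ q hq]
        have := this.2
        rw [Set.mem_smul_set_iff_inv_smul_mem]
        exact this
    · apply Set.union_subset Set.subset_union_left
      rw [Set.iUnion₂_subset_iff]
      intro q hq
      refine Set.subset_union_of_subset_right ?_ _
      refine Set.subset_iUnion₂_of_subset q hq ?_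
      apply Set.smul_set_mono
      rw [hA]
      exact Set.diff_subset
  have hBinv : ∀ g ∈ Q, g • B = B := by
    intro g hg
    rw [hB, Set.smul_set_union, hβQ g hg, hUinv g hg]
  refine ⟨hdisj, hBeq, hUinv, hβQ, hBinv, ?_⟩
  intro g hg
  rw [Set.smul_set_compl, hBinv g hg]
end

section
/- Assume the Setup (Notation 7.1), and let Z ⊆ Q • α be a subset that intersects both γ = α ∩ β and its complement γᶜ. Then: (a) for all g ∈ Q, B does not separate g • Z; (b) for all g ∈ Q, β separates g • Z if and only if Z ∩ (Q • A) ≠ ∅; (c) for all g ∈ P, γ separates g • Z, and α separates g • Z if and only if Z ∩ (Q • α ∖ α) ≠ ∅; (d) for all g ∈ Q ∖ P, |γ|*_{g • Z} ≤ |α|*_{g • Z}. -/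
open Pointwise

lemma sep_eq_one_iff {E : Type*} (X Z : Set E) :
    sep X Z = 1 ↔ (Z ∩ X).Nonempty ∧ (Z ∩ Xᶜ).Nonempty := by
  unfold sep; split_ifs with h <;> simp [h]

lemma sep_eq_zero_iff {E : Type*} (X Z : Set E) :
    sep X Z = 0 ↔ ¬((Z ∩ X).Nonempty ∧ (Z ∩ Xᶜ).Nonempty) := by
  unfold sep; split_ifs with h <;> simp [h]

lemma sep_le_one {E : Type*} (X Z : Set E) : sep X Z ≤ 1 := by
  unfold sep; split_ifs <;> simp

/-- Setup (Notation 7.1), with `Z ⊆ Q • α` meeting both `γ = α ∩ β` and `γᶜ`.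
Conclusions (a)–(d) of Lemma 7.4. -/
theorem stmt_5 {G E : Type*} [Group G] [MulAction G E]
    (α β : Set E) (hα : α.Nonempty) (hβ : β.Nonempty)
    (hedgeα : ∀ x : G, (α ∩ x • α).Nonempty → x • α = α)
    (hedgeβ : ∀ x : G, (β ∩ x • β).Nonempty → x • β = β)
    (P Q : Subgroup G)
    (hP : P = MulAction.stabilizer G α)
    (hQ : Q = MulAction.stabilizer G β)
    (hαβ : (α ∩ β).Nonempty)
    (hPQ : P ≤ Q)
    (hsimple : ∀ g : G, (α ∩ g • β).Nonempty → g ∈ Q)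
    (γ A B : Set E)
    (hγ : γ = α ∩ β) (hA : A = α \ γ) (hB : B = β ∪ ⋃ q ∈ Q, q • α)
    (Z : Set E) (hZ : Z ⊆ ⋃ q ∈ Q, q • α)
    (hZγ : (Z ∩ γ).Nonempty) (hZγc : (Z ∩ γᶜ).Nonempty) :
    (∀ g ∈ Q, sep B (g • Z) = 0) ∧
    (∀ g ∈ Q, (sep β (g • Z) = 1 ↔ (Z ∩ ⋃ q ∈ Q, q • A).Nonempty)) ∧
    (∀ g ∈ P, sep γ (g • Z) = 1 ∧
      (sep α (g • Z) = 1 ↔ (Z ∩ ((⋃ q ∈ Q, q • α) \ α)).Nonempty)) ∧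
    (∀ g ∈ Q, g ∉ P → sep γ (g • Z) ≤ sep α (g • Z)) := by
  have hQβ : ∀ g ∈ Q, g • β = β := by
    intro g hg; rw [hQ] at hg; exact hg
  have hPα : ∀ g ∈ P, g • α = α := by
    intro g hg; rw [hP] at hg; exact hg
  refine ⟨?_, ?_, ?_, ?_⟩
  · -- (a)
    intro g hg
    rw [sep_eq_zero_iff]
    rintro ⟨-, x, hxZ, hxB⟩
    obtain ⟨z, hzZ, rfl⟩ := hxZ
    obtain ⟨q, hq, hzq⟩ := Set.mem_iUnion₂.mp (hZ hzZ)
    exact hxB (hB ▸ Or.inr (Set.mem_iUnion₂.mpr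
      ⟨g * q, mul_mem hg hq, by rw [mul_smul]; exact Set.smul_mem_smul_set hzq⟩))
  · -- (b)
    intro g hg
    have hgβ := hQβ g hg
    rw [sep_eq_one_iff]
    obtain ⟨z0, hz0Z, hz0γ⟩ := hZγ
    have hz0β : z0 ∈ β := (hγ ▸ hz0γ).2
    have h1 : (g • Z ∩ β).Nonempty :=
      ⟨g • z0, Set.smul_mem_smul_set hz0Z, hgβ ▸ Set.smul_mem_smul_set hz0β⟩
    simp only [h1, true_and]
    constructor
    · rintro ⟨x, hxZ, hxβ⟩
      obtain ⟨z, hzZ, rfl⟩ := hxZ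
      have hzβ : z ∉ β := fun h => hxβ (hgβ ▸ Set.smul_mem_smul_set h)
      obtain ⟨q, hq, hzq⟩ := Set.mem_iUnion₂.mp (hZ hzZ)
      obtain ⟨a, ha, rfl⟩ := hzq
      have haβ : a ∉ β := fun h => hzβ (hQβ q hq ▸ Set.smul_mem_smul_set h)
      refine ⟨q • a, hzZ, Set.mem_iUnion₂.mpr ⟨q, hq, Set.smul_mem_smul_set ?_⟩⟩
      rw [hA, hγ]
      exact ⟨ha, fun h => haβ h.2⟩
    · rintro ⟨z, hzZ, hzU⟩
      obtain ⟨q, hq, hzq⟩ := Set.mem_iUnion₂.mp hzU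
      obtain ⟨a, ha, rfl⟩ := hzq
      rw [hA, hγ] at ha
      have haβ : a ∉ β := fun h => ha.2 ⟨ha.1, h⟩
      have hzβ : q • a ∉ β := fun h => by
        rw [← hQβ q hq] at h
        exact haβ (Set.smul_mem_smul_set_iff.mp h)
      refine ⟨g • (q • a), Set.smul_mem_smul_set hzZ, fun h => hzβ ?_⟩
      rw [← hgβ] at h
      exact Set.smul_mem_smul_set_iff.mp h
  · -- (c)
    intro g hg
    have hgα := hPα g hg
    have hgβ := hQβ g (hPQ hg)
    have hgγ : g • γ = γ := by
      rw [hγ, Set.smul_set_inter, hgα, hgβ]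
    obtain ⟨z0, hz0Z, hz0γ⟩ := hZγ
    obtain ⟨z1, hz1Z, hz1γ⟩ := hZγc
    constructor
    · rw [sep_eq_one_iff]
      refine ⟨⟨g • z0, Set.smul_mem_smul_set hz0Z, hgγ ▸ Set.smul_mem_smul_set hz0γ⟩,
        ⟨g • z1, Set.smul_mem_smul_set hz1Z, fun h => hz1γ ?_⟩⟩
      rw [← hgγ] at h
      exact Set.smul_mem_smul_set_iff.mp h
    · rw [sep_eq_one_iff]
      have hz0α : z0 ∈ α := (hγ ▸ hz0γ).1
      have h1 : (g • Z ∩ α).Nonempty :=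
        ⟨g • z0, Set.smul_mem_smul_set hz0Z, hgα ▸ Set.smul_mem_smul_set hz0α⟩
      simp only [h1, true_and]
      constructor
      · rintro ⟨x, hxZ, hxα⟩
        obtain ⟨z, hzZ, rfl⟩ := hxZ
        have hzα : z ∉ α := fun h => hxα (hgα ▸ Set.smul_mem_smul_set h)
        exact ⟨z, hzZ, hZ hzZ, hzα⟩
      · rintro ⟨z, hzZ, -, hzα⟩
        refine ⟨g • z, Set.smul_mem_smul_set hzZ, fun h => hzα ?_⟩
        rw [← hgα] at h
        exact Set.smul_mem_smul_set_iff.mp h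
  · -- (d)
    intro g hgQ hgP
    by_cases h : (g • Z ∩ γ).Nonempty ∧ (g • Z ∩ γᶜ).Nonempty
    · have hdisj : ¬(α ∩ g • α).Nonempty := by
        intro hne
        exact hgP (hP ▸ (show g ∈ MulAction.stabilizer G α from hedgeα g hne))
      obtain ⟨z0, hz0Z, hz0γ⟩ := hZγ
      have hz0α : z0 ∈ α := (hγ ▸ hz0γ).1
      have hsepα : sep α (g • Z) = 1 := by
        rw [sep_eq_one_iff]
        obtain ⟨x, hxZ, hxγ⟩ := h.1
        refine ⟨⟨x, hxZ, (hγ ▸ hxγ).1⟩,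
          ⟨g • z0, Set.smul_mem_smul_set hz0Z, fun hc => hdisj ⟨g • z0, hc,
            Set.smul_mem_smul_set hz0α⟩⟩⟩
      rw [hsepα]
      exact sep_le_one _ _
    · rw [(sep_eq_zero_iff _ _).mpr h]
      exact Nat.zero_le _
end

section
/- Assume the Setup (Section 7.2). Then A ∩ (x • B) = ∅, and for every g ∈ G the translate g • γ is disjoint from both A and x • B, and the translate g • γ' is disjoint from both A and x • B. In other words, G • (γ ∪ x • γ') is disjoint from A ∪ (x • B), and A and x • B are disjoint from each other. -/
open Pointwise

/-- Setup (Section 7.2): `α`, `β` satisfy the (edge) property with setwise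
stabilizers `P`, `Q`, and `x ∈ G`; `γ = P • (α ∩ x • β)`,
`γ' = Q • (β ∩ x⁻¹ • α)`, `A = α \ γ`, `B = β \ γ'`.  Then `A ∩ x • B = ∅`
and every `G`-translate of `γ` and of `γ'` is disjoint from both `A` and
`x • B`. -/
theorem stmt_8 {G E : Type*} [Group G] [MulAction G E]
    (α β : Set E)
    (hedgeα : ∀ y : G, (α ∩ y • α).Nonempty → y • α = α)
    (hedgeβ : ∀ y : G, (β ∩ y • β).Nonempty → y • β = β)
    (P Q : Subgroup G)
    (hP : P = MulAction.stabilizer G α)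
    (hQ : Q = MulAction.stabilizer G β)
    (x : G)
    (γ γ' A B : Set E)
    (hγ : γ = ⋃ g ∈ P, g • (α ∩ x • β))
    (hγ' : γ' = ⋃ g ∈ Q, g • (β ∩ x⁻¹ • α))
    (hA : A = α \ γ) (hB : B = β \ γ') :
    A ∩ x • B = ∅ ∧
    ∀ g : G, Disjoint (g • γ) A ∧ Disjoint (g • γ) (x • B) ∧
      Disjoint (g • γ') A ∧ Disjoint (g • γ') (x • B) := by
  -- basic inclusions
  have hsubγ : α ∩ x • β ⊆ γ := by
    intro a ha
    rw [hγ]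
    exact Set.mem_biUnion P.one_mem (by simpa using ha)
  have hsubγ' : β ∩ x⁻¹ • α ⊆ γ' := by
    intro b hb
    rw [hγ']
    exact Set.mem_biUnion Q.one_mem (by simpa using hb)
  -- invariance
  have hγP : ∀ p ∈ P, ∀ e ∈ γ, p • e ∈ γ := by
    intro p hp e he
    rw [hγ] at he ⊢
    obtain ⟨g, hg, a, ha, rfl⟩ := by
      simpa [Set.mem_iUnion, Set.mem_smul_set] using he
    refine Set.mem_biUnion (P.mul_mem hp hg) ⟨x • a, ⟨ha.1, Set.smul_mem_smul_set ha.2⟩, ?_⟩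
    simp [mul_smul]
  have hγ'Q : ∀ q ∈ Q, ∀ e ∈ γ', q • e ∈ γ' := by
    intro q hq e he
    rw [hγ'] at he ⊢
    obtain ⟨g, hg, a, ha, rfl⟩ := by
      simpa [Set.mem_iUnion, Set.mem_smul_set] using he
    refine Set.mem_biUnion (Q.mul_mem hq hg) ⟨x⁻¹ • a, ⟨ha.1, Set.smul_mem_smul_set ha.2⟩, ?_⟩
    simp [mul_smul]
  -- destructor for γ
  have hmemγ : ∀ e ∈ γ, ∃ p ∈ P, ∃ a ∈ α ∩ x • β, p • a = e := by
    intro e he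
    rw [hγ] at he
    simpa [Set.mem_iUnion, Set.mem_smul_set] using he
  have hmemγ' : ∀ e ∈ γ', ∃ q ∈ Q, ∃ b ∈ β ∩ x⁻¹ • α, q • b = e := by
    intro e he
    rw [hγ'] at he
    simpa [Set.mem_iUnion, Set.mem_smul_set] using he
  constructor
  · -- A ∩ x • B = ∅
    ext e
    simp only [Set.mem_inter_iff, Set.mem_empty_iff_false, iff_false]
    rintro ⟨heA, hexB⟩
    rw [hA] at heA
    rw [Set.mem_smul_set_iff_inv_smul_mem, hB] at hexB
    exact heA.2 (hsubγ ⟨heA.1, Set.mem_smul_set_iff_inv_smul_mem.mpr hexB.1⟩)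
  · intro g
    refine ⟨?_, ?_, ?_, ?_⟩
    · -- g • γ disjoint A
      rw [Set.disjoint_left]
      intro e heγ heA
      rw [Set.mem_smul_set_iff_inv_smul_mem] at heγ
      obtain ⟨p, hp, a, ha, hpa⟩ := hmemγ _ heγ
      have hea : (g * p) • a = e := by
        rw [mul_smul, hpa, smul_inv_smul]
      rw [hA] at heA
      have hgp : g * p ∈ P := by
        rw [hP, MulAction.mem_stabilizer_iff]
        refine hedgeα _ ⟨e, heA.1, ⟨a, ha.1, hea⟩⟩
      exact heA.2 (hea ▸ hγP _ hgp a (hsubγ ha))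
    · -- g • γ disjoint x • B
      rw [Set.disjoint_left]
      intro e heγ hexB
      rw [Set.mem_smul_set_iff_inv_smul_mem] at heγ
      rw [Set.mem_smul_set_iff_inv_smul_mem, hB] at hexB
      obtain ⟨p, hp, a, ha, hpa⟩ := hmemγ _ heγ
      have hea : (g * p) • a = e := by
        rw [mul_smul, hpa, smul_inv_smul]
      have hxa : x⁻¹ • a ∈ β ∩ x⁻¹ • α :=
        ⟨Set.mem_smul_set_iff_inv_smul_mem.mp ha.2, ⟨a, ha.1, rfl⟩⟩
      have hkey : (x⁻¹ * (g * p) * x) • (x⁻¹ • a) = x⁻¹ • e := by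
        rw [← hea]
        simp [mul_smul]
      have hq : x⁻¹ * (g * p) * x ∈ Q := by
        rw [hQ, MulAction.mem_stabilizer_iff]
        refine hedgeβ _ ⟨x⁻¹ • e, hexB.1, ⟨x⁻¹ • a, hxa.1, hkey⟩⟩
      exact hexB.2 (hkey ▸ hγ'Q _ hq _ (hsubγ' hxa))
    · -- g • γ' disjoint A
      rw [Set.disjoint_left]
      intro e heγ' heA
      rw [Set.mem_smul_set_iff_inv_smul_mem] at heγ'
      obtain ⟨q, hq, b, hb, hqb⟩ := hmemγ' _ heγ'
      rw [hA] at heA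
      have hxb : x • b ∈ α ∩ x • β :=
        ⟨by obtain ⟨a, ha, rfl⟩ := hb.2; simpa using ha, ⟨b, hb.1, rfl⟩⟩
      have hkey : (g * q * x⁻¹) • (x • b) = e := by
        rw [← smul_inv_smul g e, ← hqb]
        simp [mul_smul]
      have hp : g * q * x⁻¹ ∈ P := by
        rw [hP, MulAction.mem_stabilizer_iff]
        refine hedgeα _ ⟨e, heA.1, ⟨x • b, hxb.1, hkey⟩⟩
      exact heA.2 (hkey ▸ hγP _ hp _ (hsubγ hxb))
    · -- g • γ' disjoint x • B
      rw [Set.disjoint_left]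
      intro e heγ' hexB
      rw [Set.mem_smul_set_iff_inv_smul_mem] at heγ'
      rw [Set.mem_smul_set_iff_inv_smul_mem, hB] at hexB
      obtain ⟨q, hq, b, hb, hqb⟩ := hmemγ' _ heγ'
      have hkey : (x⁻¹ * g * q) • b = x⁻¹ • e := by
        rw [mul_assoc, mul_smul, mul_smul, hqb, smul_inv_smul]
      have hq2 : x⁻¹ * g * q ∈ Q := by
        rw [hQ, MulAction.mem_stabilizer_iff]
        refine hedgeβ _ ⟨x⁻¹ • e, hexB.1, ⟨b, hb.1, hkey⟩⟩
      exact hexB.2 (hkey ▸ hγ'Q _ hq2 _ (hsubγ' hb))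
end
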